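/- Let k > 0 and let (φ, d, Γ) : I → ℝ³ solve the ODE system φ' = -dφ, d' = -(d² + Γ)/2 + φ - 4k², Γ' = 2d(φ - 4k² - Γ) on an interval I containing 0, with φ(t) ≠ 0 for all t. Then the quantity (2φ(t) - Γ(t) - 4k²)/φ(t)² is constant on I. -/

import Mathlib

/-- First material invariant: along solutions of the spectral dynamics system
`φ' = -dφ`, `d' = -(d² + Γ)/2 + φ - 4k²`, `Γ' = 2d(φ - 4k² - Γ)` with `φ ≠ 0`,
the quantity `(2φ - Γ - 4k²)/φ²` is constant. -/
theorem first_material_invariant (k : ℝ) (hk : 0 < k) (I : Set ℝ)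
    (hI : I.OrdConnected) (h0 : (0 : ℝ) ∈ I)
    (φ d Γ : ℝ → ℝ)
    (hφ : ∀ t ∈ I, HasDerivAt φ (-(d t) * φ t) t)
    (hd : ∀ t ∈ I, HasDerivAt d (-((d t) ^ 2 + Γ t) / 2 + φ t - 4 * k ^ 2) t)
    (hΓ : ∀ t ∈ I, HasDerivAt Γ (2 * d t * (φ t - 4 * k ^ 2 - Γ t)) t)
    (hne : ∀ t ∈ I, φ t ≠ 0) :
    ∀ t ∈ I, (2 * φ t - Γ t - 4 * k ^ 2) / (φ t) ^ 2
      = (2 * φ 0 - Γ 0 - 4 * k ^ 2) / (φ 0) ^ 2 := by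
  set F : ℝ → ℝ := fun t => (2 * φ t - Γ t - 4 * k ^ 2) / (φ t) ^ 2 with hF
  have hF' : ∀ t ∈ I, HasDerivAt F 0 t := by
    intro t ht
    have hnum : HasDerivAt (fun t => 2 * φ t - Γ t - 4 * k ^ 2)
        (2 * (-(d t) * φ t) - 2 * d t * (φ t - 4 * k ^ 2 - Γ t)) t := by
      simpa using (((hφ t ht).const_mul 2).sub (hΓ t ht)).sub_const (4 * k ^ 2)
    have hden : HasDerivAt (fun t => (φ t) ^ 2)
        (2 * φ t ^ 1 * (-(d t) * φ t)) t := by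
      simpa using (hφ t ht).fun_pow 2
    have h := hnum.fun_div hden (pow_ne_zero 2 (hne t ht))
    refine h.congr_deriv ?_
    have hφt := hne t ht
    rw [div_eq_zero_iff]
    left
    ring
  intro t ht
  rcases le_total 0 t with h0t | ht0
  · have hsub : Set.Icc (0:ℝ) t ⊆ I := hI.out h0 ht
    have := constant_of_has_deriv_right_zero
      (f := F) (a := 0) (b := t)
      (fun x hx => ((hF' x (hsub hx)).continuousAt).continuousWithinAt)
      (fun x hx => ((hF' x (hsub (Set.mem_Icc_of_Ico hx))).hasDerivWithinAt))
    exact this t (Set.mem_Icc.mpr ⟨h0t, le_refl t⟩)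
  · have hsub : Set.Icc t (0:ℝ) ⊆ I := hI.out ht h0
    have := constant_of_has_deriv_right_zero
      (f := F) (a := t) (b := 0)
      (fun x hx => ((hF' x (hsub hx)).continuousAt).continuousWithinAt)
      (fun x hx => ((hF' x (hsub (Set.mem_Icc_of_Ico hx))).hasDerivWithinAt))
    exact (this 0 (Set.mem_Icc.mpr ⟨ht0, le_refl 0⟩)).symm
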